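/- Let k be a non-dyadic nonarchimedean local field (odd residue characteristic) with ring of integers O, and let i, j ∈ M₂(k) satisfy ij = −ji, i² = α·I, j² = β·I with α, β ∈ O^*. Then the O-order O[i,j] generated by i and j is maximal, i.e., it is contained in exactly one maximal order of M₂(k), namely itself (it equals a conjugate of M₂(O)). -/

import Mathlib

open IsLocalRing Polynomial

section Arith
variable {O : Type*} [CommRing O] [IsDomain O] [IsDiscreteValuationRing O]
  [IsAdicComplete (IsLocalRing.maximalIdeal O) O] [Finite (IsLocalRing.ResidueField O)]

set_option linter.unusedSectionVars false

lemma sq_lift (h2 : IsUnit (2 : O)) (u a₀ : O) (ha : residue O a₀ ≠ 0)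
    (hu : residue O a₀ ^ 2 = residue O u) : ∃ r : O, r ^ 2 = u := by
  have hmonic : (X ^ 2 - C u : O[X]).Monic := monic_X_pow_sub_C u (by norm_num)
  have hmem : (X ^ 2 - C u : O[X]).eval a₀ ∈ maximalIdeal O := by
    rw [← residue_eq_zero_iff]
    have : residue O ((X ^ 2 - C u : O[X]).eval a₀) = residue O a₀ ^ 2 - residue O u := by
      simp [eval_sub, eval_pow, map_sub, map_pow]
    rw [this, hu, sub_self]
  have hderiv : IsUnit (Ideal.Quotient.mk (maximalIdeal O)
      (((X ^ 2 - C u : O[X]).derivative).eval a₀)) := by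
    have hd : ((X ^ 2 - C u : O[X]).derivative).eval a₀ = 2 * a₀ := by
      simp [derivative_sub, derivative_X_pow, one_add_one_eq_two]
    rw [hd]
    have : residue O (2 * a₀) ≠ 0 := by
      rw [map_mul]
      apply mul_ne_zero _ ha
      rw [residue_ne_zero_iff_isUnit]; exact h2
    exact isUnit_iff_ne_zero.mpr this
  obtain ⟨r, hr, -⟩ := HenselianRing.is_henselian (I := maximalIdeal O)
    (X ^ 2 - C u) hmonic a₀ hmem hderiv
  refine ⟨r, ?_⟩
  have := hr
  simp only [IsRoot, eval_sub, eval_pow, eval_X, eval_C, sub_eq_zero] at this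
  exact this

lemma exists_circle_aux (h2 : IsUnit (2 : O)) (α β : O) (hα : IsUnit α)
    (aR bR : ResidueField O) (haR : aR ≠ 0)
    (hsol : residue O α * aR ^ 2 + residue O β * bR ^ 2 = 1) :
    ∃ s t : O, α * s ^ 2 + β * t ^ 2 = 1 := by
  obtain ⟨a₀, rfl⟩ := residue_surjective (R := O) aR
  obtain ⟨b₀, rfl⟩ := residue_surjective (R := O) bR
  set α' : O := ↑hα.unit⁻¹ with hα'
  have hαα' : α * α' = 1 := by
    rw [hα']; exact_mod_cast hα.unit.mul_inv
  set u : O := α' * (1 - β * b₀ ^ 2) with hu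
  have hsq : residue O a₀ ^ 2 = residue O u := by
    have h1 : residue O α * residue O a₀ ^ 2 = 1 - residue O β * residue O b₀ ^ 2 := by
      rw [← hsol]; ring
    have h2' : residue O u = residue O α' * (1 - residue O β * residue O b₀ ^ 2) := by
      simp [hu, map_mul, map_sub, map_one, map_pow]
    rw [h2', ← h1]
    have : residue O α' * residue O α = 1 := by
      rw [← map_mul, mul_comm α' α, hαα', map_one]
    calc residue O a₀ ^ 2 = (residue O α' * residue O α) * residue O a₀ ^ 2 := by
          rw [this, one_mul]
      _ = residue O α' * (residue O α * residue O a₀ ^ 2) := by ring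
  obtain ⟨r, hr⟩ := sq_lift h2 u a₀ haR hsq
  refine ⟨r, b₀, ?_⟩
  rw [hr, hu]
  calc α * (α' * (1 - β * b₀ ^ 2)) + β * b₀ ^ 2
      = (α * α') * (1 - β * b₀ ^ 2) + β * b₀ ^ 2 := by ring
    _ = 1 := by rw [hαα']; ring

lemma exists_circle (h2 : IsUnit (2 : O)) (α β : O) (hα : IsUnit α) (hβ : IsUnit β) :
    ∃ s t : O, α * s ^ 2 + β * t ^ 2 = 1 := by
  classical
  letI : Fintype (ResidueField O) := Fintype.ofFinite _
  have h2F : (2 : ResidueField O) ≠ 0 := by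
    have : residue O (2 : O) ≠ 0 := by
      rw [residue_ne_zero_iff_isUnit]; exact h2
    simpa [map_ofNat] using this
  have hchar : ringChar (ResidueField O) ≠ 2 := by
    intro hc
    exact h2F (by
      haveI := ringChar.of_eq hc
      exact CharTwo.two_eq_zero)
  have hcard : Fintype.card (ResidueField O) % 2 = 1 :=
    FiniteField.odd_card_of_char_ne_two hchar
  have hαF : residue O α ≠ 0 := by rw [residue_ne_zero_iff_isUnit]; exact hα
  have hβF : residue O β ≠ 0 := by rw [residue_ne_zero_iff_isUnit]; exact hβ
  have hdegf : (C (residue O α) * X ^ 2 : (ResidueField O)[X]).degree = 2 := by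
    exact_mod_cast degree_C_mul_X_pow 2 hαF
  have hdegg : (C (residue O β) * X ^ 2 - C 1 : (ResidueField O)[X]).degree = 2 := by
    have h1 : (C (residue O β) * X ^ 2 : (ResidueField O)[X]).degree = 2 := by
      exact_mod_cast degree_C_mul_X_pow 2 hβF
    rw [sub_eq_add_neg]
    rw [degree_add_eq_left_of_degree_lt]
    · exact h1
    · rw [h1, degree_neg]
      exact lt_of_le_of_lt (degree_C_le) (by norm_num)
  obtain ⟨aR, bR, hab⟩ := FiniteField.exists_root_sum_quadratic hdegf hdegg hcard
  simp only [eval_mul, eval_pow, eval_X, eval_C, eval_sub, eval_one] at hab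
  have hsol : residue O α * aR ^ 2 + residue O β * bR ^ 2 = 1 := by linear_combination hab
  by_cases haR : aR ≠ 0
  · exact exists_circle_aux h2 α β hα aR bR haR hsol
  · push_neg at haR
    have hbR : bR ≠ 0 := by
      intro hb
      rw [haR, hb] at hsol
      simp at hsol
    obtain ⟨s, t, hst⟩ := exists_circle_aux h2 β α hβ bR aR hbR (by linear_combination hsol)
    exact ⟨t, s, by linear_combination hst⟩

end Arith

section Conj

open Matrix

variable {O : Type*} [CommRing O] {K : Type*} [Field K] [Algebra O K]

lemma conj_preserve_flip
    (u : (Matrix (Fin 2) (Fin 2) K)ˣ)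
    (h : ∀ n : Matrix (Fin 2) (Fin 2) K,
      (∀ a b, n a b ∈ Set.range (algebraMap O K)) →
      ∀ a b, ((↑u : Matrix (Fin 2) (Fin 2) K) * n * (↑u⁻¹ : Matrix (Fin 2) (Fin 2) K)) a b
        ∈ Set.range (algebraMap O K)) :
    ∀ n : Matrix (Fin 2) (Fin 2) K,
      (∀ a b, n a b ∈ Set.range (algebraMap O K)) →
      ∀ a b, ((↑u⁻¹ : Matrix (Fin 2) (Fin 2) K) * n * (↑u : Matrix (Fin 2) (Fin 2) K)) a b
        ∈ Set.range (algebraMap O K) := by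
  classical
  set R : Subring K := (algebraMap O K).range with hR
  have hmem : ∀ z : K, z ∈ Set.range (algebraMap O K) ↔ z ∈ R := by
    intro z; simp [hR, RingHom.mem_range, Set.mem_range]
  set v : Matrix (Fin 2) (Fin 2) K := ↑u with hv
  set vi : Matrix (Fin 2) (Fin 2) K := ↑u⁻¹ with hvi
  have hvvi : v * vi = 1 := u.mul_inv
  have hviv : vi * v = 1 := u.inv_mul
  -- the Kronecker matrix of conjugation by u
  set P : Matrix (Fin 2 × Fin 2) (Fin 2 × Fin 2) K :=
    fun p q => v p.1 q.1 * vi q.2 p.2 with hP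
  set Q : Matrix (Fin 2 × Fin 2) (Fin 2 × Fin 2) K :=
    fun p q => vi p.1 q.1 * v q.2 p.2 with hQ
  have hconj : ∀ (n : Matrix (Fin 2) (Fin 2) K) (a b : Fin 2),
      (v * n * vi) a b = ∑ q : Fin 2 × Fin 2, P (a, b) q * n q.1 q.2 := by
    intro n a b
    rw [Matrix.mul_apply]
    simp only [Matrix.mul_apply, Finset.sum_mul, Fintype.sum_prod_type]
    rw [Finset.sum_comm]
    apply Finset.sum_congr rfl; intro c _
    apply Finset.sum_congr rfl; intro d _
    ring
  have hconj' : ∀ (n : Matrix (Fin 2) (Fin 2) K) (a b : Fin 2),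
      (vi * n * v) a b = ∑ q : Fin 2 × Fin 2, Q (a, b) q * n q.1 q.2 := by
    intro n a b
    rw [Matrix.mul_apply]
    simp only [Matrix.mul_apply, Finset.sum_mul, Fintype.sum_prod_type]
    rw [Finset.sum_comm]
    apply Finset.sum_congr rfl; intro c _
    apply Finset.sum_congr rfl; intro d _
    ring
  -- entries of P are in R
  have hPR : ∀ p q, P p q ∈ R := by
    rintro ⟨a, b⟩ ⟨c, d⟩
    have hsingle : ∀ a b, (Matrix.single c d (1:K)) a b ∈ Set.range (algebraMap O K) := by
      intro a b
      by_cases hh : c = a ∧ d = b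
      · obtain ⟨rfl, rfl⟩ := hh
        exact ⟨1, by simp [Matrix.single]⟩
      · exact ⟨0, by simp [Matrix.single, hh]⟩
    have := h _ hsingle a b
    rw [hconj] at this
    have heval : ∑ q : Fin 2 × Fin 2, P (a, b) q * (Matrix.single c d (1:K)) q.1 q.2
        = P (a, b) (c, d) := by
      rw [Finset.sum_eq_single (c, d)]
      · simp [Matrix.single]
      · rintro ⟨c', d'⟩ _ hne
        have hcc : ¬(c = c' ∧ d = d') := by
          rintro ⟨rfl, rfl⟩; exact hne rfl
        simp [Matrix.single, hcc]
      · intro hc; exact absurd (Finset.mem_univ _) hc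
    rw [heval] at this
    exact (hmem _).mp this
  -- Q * P = 1
  have hQP : Q * P = 1 := by
    ext ⟨a, b⟩ ⟨e, f⟩
    rw [Matrix.mul_apply]
    rw [Fintype.sum_prod_type]
    have : ∀ c d : Fin 2, Q (a,b) (c,d) * P (c,d) (e,f)
        = (vi a c * v c e) * (v d b * vi f d) := by intro c d; simp [hP, hQ]; ring
    simp only [this]
    have hsum : ∑ c : Fin 2, ∑ d : Fin 2, vi a c * v c e * (v d b * vi f d)
        = (∑ c : Fin 2, vi a c * v c e) * (∑ d : Fin 2, v d b * vi f d) := by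
      rw [Finset.sum_mul_sum]
    rw [hsum]
    have h1 : (∑ c : Fin 2, vi a c * v c e) = (vi * v) a e := (Matrix.mul_apply).symm
    have h2 : (∑ d : Fin 2, v d b * vi f d) = (vi * v) f b := by
      rw [Matrix.mul_apply]
      exact Finset.sum_congr rfl fun d _ => mul_comm _ _
    rw [h1, h2, hviv]
    simp only [Matrix.one_apply, Prod.mk.injEq]
    by_cases hae : a = e <;> by_cases hbf : b = f <;> simp [hae, hbf, eq_comm]
  -- det P = 1
  have hPkron : P = Matrix.kroneckerMap (· * ·) v vi.transpose := by
    ext ⟨a, b⟩ ⟨c, d⟩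
    simp [Matrix.kroneckerMap, Matrix.transpose_apply, hP]
  have hdetP : P.det = 1 := by
    rw [hPkron, Matrix.det_kronecker, Matrix.det_transpose]
    rw [Fintype.card_fin, ← mul_pow, ← Matrix.det_mul, hvvi, Matrix.det_one, one_pow]
  have hPadj : P * P.adjugate = 1 := by
    rw [Matrix.mul_adjugate, hdetP, one_smul]
  have hQadj : Q = P.adjugate := by
    calc Q = Q * (P * P.adjugate) := by rw [hPadj, mul_one]
    _ = (Q * P) * P.adjugate := by rw [mul_assoc]
    _ = P.adjugate := by rw [hQP, one_mul]
  -- entries of adjugate P are in R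
  have hQR : ∀ p q, Q p q ∈ R := by
    have hP0 : ∃ P₀ : Matrix (Fin 2 × Fin 2) (Fin 2 × Fin 2) R,
        P = P₀.map R.subtype := ⟨fun p q => ⟨P p q, hPR p q⟩, by ext p q; simp; rfl⟩
    obtain ⟨P₀, hP₀⟩ := hP0
    have hadj : (P₀.map R.subtype).adjugate = (P₀.adjugate).map R.subtype := by
      have := (R.subtype).map_adjugate P₀
      simpa [RingHom.mapMatrix_apply] using this.symm
    intro p q
    rw [hQadj, hP₀, hadj]
    simp only [Matrix.map_apply]
    exact SetLike.coe_mem _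
  -- conclude
  intro n hn a b
  rw [hconj' n a b, hmem]
  apply Subring.sum_mem
  rintro ⟨c, d⟩ _
  exact R.mul_mem (hQR _ _) ((hmem _).mp (hn c d))

end Conj

section Main

lemma combo_entries {K : Type*} [Field K] (A B C D : K) :
    A • Matrix.single (0 : Fin 2) (0 : Fin 2) (1 : K) +
      B • Matrix.single (0 : Fin 2) (1 : Fin 2) (1 : K) +
      C • Matrix.single (1 : Fin 2) (0 : Fin 2) (1 : K) +
      D • Matrix.single (1 : Fin 2) (1 : Fin 2) (1 : K) = !![A, B; C, D] := by
  ext r c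
  fin_cases r <;> fin_cases c <;> simp [Matrix.single]

set_option maxHeartbeats 1000000 in
lemma part1 (O : Type*) [CommRing O] [IsDomain O] [IsDiscreteValuationRing O]
    [IsAdicComplete (IsLocalRing.maximalIdeal O) O] [Finite (IsLocalRing.ResidueField O)]
    (K : Type*) [Field K] [Algebra O K] [IsFractionRing O K]
    (h2 : IsUnit (2 : O))
    (i j : Matrix (Fin 2) (Fin 2) K)
    (α β : O) (hα : IsUnit α) (hβ : IsUnit β)
    (hanti : i * j = -(j * i))
    (hi2 : i * i = algebraMap O K α • (1 : Matrix (Fin 2) (Fin 2) K))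
    (hj2 : j * j = algebraMap O K β • (1 : Matrix (Fin 2) (Fin 2) K)) :
    ∃ g : Matrix.GeneralLinearGroup (Fin 2) K,
      {x | ∃ a b c d : O, x = algebraMap O K a • (1 : Matrix (Fin 2) (Fin 2) K) +
        algebraMap O K b • i + algebraMap O K c • j + algebraMap O K d • (i * j)} =
      {m | ∀ r s : Fin 2,
        ((↑g⁻¹ : Matrix (Fin 2) (Fin 2) K) * m * (↑g : Matrix (Fin 2) (Fin 2) K)) r s
          ∈ Set.range (algebraMap O K)} := by
  classical
  obtain ⟨s, t, hst⟩ := exists_circle h2 α β hα hβ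
  obtain ⟨ι, hι⟩ : ∃ f : O →+* K, f = algebraMap O K := ⟨_, rfl⟩
  rw [← hι] at hi2 hj2 ⊢
  have hinj : Function.Injective ι := by rw [hι]; exact IsFractionRing.injective O K
  -- O-level units
  obtain ⟨ha, hhalf⟩ : ∃ h : O, 2 * h = 1 := h2.exists_right_inv
  have hγ : IsUnit (α * β) := hα.mul hβ
  obtain ⟨gi, hγgi⟩ : ∃ g : O, α * β * g = 1 := hγ.exists_right_inv
  -- K-level facts
  have hstK : ι α * ι s ^ 2 + ι β * ι t ^ 2 = 1 := by
    have := congrArg ι hst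
    simpa [map_add, map_mul, map_pow, map_one] using this
  have hhalfK : (2 : K) * ι ha = 1 := by
    have := congrArg ι hhalf
    simpa [map_mul, map_one, map_ofNat] using this
  have hgiK : ι α * ι β * ι gi = 1 := by
    have := congrArg ι hγgi
    simpa [map_mul, map_one] using this
  have h2O : (2 : O) ≠ 0 := h2.ne_zero
  have h2K : (2 : K) ≠ 0 := by
    intro h0
    exact h2O (hinj (by rw [map_ofNat, map_zero, h0]))
  have hαK : ι α ≠ 0 := by
    intro h0
    exact hα.ne_zero (hinj (by rw [map_zero, h0]))
  have hβK : ι β ≠ 0 := by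
    intro h0
    exact hβ.ne_zero (hinj (by rw [map_zero, h0]))
  -- atom product lemmas; k := i * j kept as the expression i * j
  have hji : j * i = -(i * j) := by rw [hanti, neg_neg]
  have hik : i * (i * j) = ι α • j := by rw [← mul_assoc, hi2, smul_mul_assoc, one_mul]
  have hki : (i * j) * i = -(ι α • j) := by
    rw [hanti, neg_mul, mul_assoc, hi2, mul_smul_comm, mul_one]
  have hkj : (i * j) * j = ι β • i := by rw [mul_assoc, hj2, mul_smul_comm, mul_one]
  have hjk : j * (i * j) = -(ι β • i) := by
    rw [← mul_assoc, hji, neg_mul, mul_assoc, hj2, mul_smul_comm, mul_one]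
  have hkk : (i * j) * (i * j) = -((ι α * ι β) • (1 : Matrix (Fin 2) (Fin 2) K)) := by
    calc (i * j) * (i * j) = i * ((j * i) * j) := by rw [mul_assoc, mul_assoc]
      _ = i * ((-(i * j)) * j) := by rw [hji]
      _ = -(i * ((i * j) * j)) := by rw [neg_mul, mul_neg]
      _ = -(i * (ι β • i)) := by rw [hkj]
      _ = -(ι β • (i * i)) := by rw [mul_smul_comm]
      _ = -(ι β • (ι α • (1 : Matrix (Fin 2) (Fin 2) K))) := by rw [hi2]
      _ = -((ι α * ι β) • (1 : Matrix (Fin 2) (Fin 2) K)) := by rw [smul_smul, mul_comm]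
  -- the elements w, x
  obtain ⟨w, hw⟩ : ∃ w' : Matrix (Fin 2) (Fin 2) K, w' = ι s • i + ι t • j := ⟨_, rfl⟩
  obtain ⟨x, hx⟩ : ∃ x' : Matrix (Fin 2) (Fin 2) K, x' = (ι β * ι t) • i - (ι α * ι s) • j :=
    ⟨_, rfl⟩
  have hw2 : w * w = 1 := by
    have : w * w = (ι α * ι s ^ 2 + ι β * ι t ^ 2) • (1 : Matrix (Fin 2) (Fin 2) K) := by
      rw [hw]
      simp only [add_mul, mul_add, sub_mul, mul_sub, smul_mul_assoc, mul_smul_comm, smul_smul,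
        one_mul, mul_one, smul_add, smul_sub, smul_neg, mul_neg, neg_mul, neg_neg,
        hi2, hj2, hji, hik, hki, hjk, hkj, hkk]
      match_scalars <;> ring
    rw [this, hstK, one_smul]
  have hxw : x * w = i * j := by
    have : x * w = (ι α * ι s ^ 2 + ι β * ι t ^ 2) • (i * j) := by
      rw [hw, hx]
      simp only [add_mul, mul_add, sub_mul, mul_sub, smul_mul_assoc, mul_smul_comm, smul_smul,
        one_mul, mul_one, smul_add, smul_sub, smul_neg, mul_neg, neg_mul, neg_neg,
        hi2, hj2, hji, hik, hki, hjk, hkj, hkk]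
      match_scalars <;> ring
    rw [this, hstK, one_smul]
  have hwx : w * x = -(i * j) := by
    have : w * x = -((ι α * ι s ^ 2 + ι β * ι t ^ 2) • (i * j)) := by
      rw [hw, hx]
      simp only [add_mul, mul_add, sub_mul, mul_sub, smul_mul_assoc, mul_smul_comm, smul_smul,
        one_mul, mul_one, smul_add, smul_sub, smul_neg, mul_neg, neg_mul, neg_neg,
        hi2, hj2, hji, hik, hki, hjk, hkj, hkk]
      match_scalars <;> ring
    rw [this, hstK, one_smul]
  have hxx : x * x = (ι α * ι β) • (1 : Matrix (Fin 2) (Fin 2) K) := by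
    have : x * x = (ι α * ι s ^ 2 + ι β * ι t ^ 2) • ((ι α * ι β) • (1 : Matrix (Fin 2) (Fin 2) K)) := by
      rw [hx]
      simp only [add_mul, mul_add, sub_mul, mul_sub, smul_mul_assoc, mul_smul_comm, smul_smul,
        one_mul, mul_one, smul_add, smul_sub, smul_neg, mul_neg, neg_mul, neg_neg,
        hi2, hj2, hji, hik, hki, hjk, hkj, hkk]
      match_scalars <;> ring
    rw [this, hstK, one_smul]
  have hwk : w * (i * j) = -x := by
    rw [hw, hx]
    simp only [add_mul, smul_mul_assoc, hik, hjk]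
    match_scalars <;> ring
  have hkw : (i * j) * w = x := by
    rw [hw, hx]
    simp only [mul_add, mul_smul_comm, hki, hkj]
    match_scalars <;> ring
  have hxk : x * (i * j) = (ι α * ι β) • w := by
    rw [hw, hx]
    simp only [sub_mul, smul_mul_assoc, hik, hjk, smul_add, smul_smul]
    match_scalars <;> ring
  have hkx : (i * j) * x = -((ι α * ι β) • w) := by
    rw [hw, hx]
    simp only [mul_sub, mul_smul_comm, hki, hkj, smul_add, smul_smul]
    match_scalars <;> ring
  -- idempotents and matrix units inside the order
  obtain ⟨e, he⟩ : ∃ e' : Matrix (Fin 2) (Fin 2) K, e' = ι ha • (1 + w) := ⟨_, rfl⟩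
  obtain ⟨f, hf⟩ : ∃ f' : Matrix (Fin 2) (Fin 2) K, f' = 1 - e := ⟨_, rfl⟩
  obtain ⟨p, hp⟩ : ∃ p' : Matrix (Fin 2) (Fin 2) K, p' = ι ha • (x - i * j) := ⟨_, rfl⟩
  obtain ⟨q, hq⟩ : ∃ q' : Matrix (Fin 2) (Fin 2) K, q' = (ι gi * ι ha) • (x + i * j) := ⟨_, rfl⟩
  have hee : e * e = e := by
    rw [he]
    simp only [smul_mul_assoc, mul_smul_comm, smul_smul, add_mul, mul_add, one_mul, mul_one, hw2,
      smul_add]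
    match_scalars <;> linear_combination (ι ha) * hhalfK
  have heq : e * q = 0 := by
    rw [he, hq]
    simp only [smul_mul_assoc, mul_smul_comm, smul_smul, add_mul, mul_add, one_mul, mul_one,
      hwx, hwk, smul_add, smul_sub, smul_neg, mul_neg, neg_mul]
    match_scalars <;> ring
  have hpe : p * e = 0 := by
    rw [he, hp]
    simp only [smul_mul_assoc, mul_smul_comm, smul_smul, sub_mul, mul_add, one_mul, mul_one,
      hxw, hkw, smul_add, smul_sub, smul_neg, mul_neg, neg_mul]
    match_scalars <;> ring
  have hpq : p * q = e := by
    rw [he, hp, hq]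
    simp only [smul_mul_assoc, mul_smul_comm, smul_smul, sub_mul, mul_add, one_mul, mul_one,
      hxx, hxk, hkx, hkk, smul_add, smul_sub, smul_neg, mul_neg, neg_mul, neg_neg]
    match_scalars <;>
      linear_combination (2 * ι ha ^ 2) * hgiK + (ι ha) * hhalfK
  have hqq : q * q = 0 := by
    rw [hq]
    simp only [smul_mul_assoc, mul_smul_comm, smul_smul, add_mul, mul_add, one_mul, mul_one,
      hxx, hxk, hkx, hkk, smul_add, smul_sub, smul_neg, mul_neg, neg_mul, neg_neg]
    match_scalars <;> ring
  -- e is nonzero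
  have hkE : i * j ≠ 0 := by
    intro h0
    have : (ι α * ι β) • (1 : Matrix (Fin 2) (Fin 2) K) = 0 := by
      have := hkk
      rw [h0] at this
      simp only [zero_mul] at this
      rw [← neg_eq_zero, ← this]
    rcases smul_eq_zero.mp this with h1 | h1
    · exact mul_ne_zero hαK hβK h1
    · exact one_ne_zero h1
  have hene : e ≠ 0 := by
    intro h0
    have hhane : ι ha ≠ 0 := by
      intro hz
      have : (1 : K) = 0 := by rw [← hhalfK, hz, mul_zero]
      exact one_ne_zero this
    have h1w : (1 : Matrix (Fin 2) (Fin 2) K) + w = 0 := by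
      rw [he] at h0
      rcases smul_eq_zero.mp h0 with h1 | h1
      · exact absurd h1 hhane
      · exact h1
    have hwm1 : w = -1 := by
      rw [← neg_eq_of_add_eq_zero_right h1w]
    have hxk' : i * j = -x := by rw [← hxw, hwm1, mul_neg, mul_one]
    have hxk'' : -(i * j) = -x := by rw [← hwx, hwm1, neg_mul, one_mul]
    have hx1 : x = i * j := neg_injective hxk''.symm
    rw [hx1] at hxk'
    have : i * j = -(i * j) := hxk' 
    have h2k : (2 : K) • (i * j) = 0 := by
      have := add_eq_zero_iff_eq_neg.mpr this
      rw [two_smul]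
      exact this
    rcases smul_eq_zero.mp h2k with h1 | h1
    · exact h2K h1
    · exact hkE h1
  -- pick a column vector not annihilated by e
  have hev : ∃ r c : Fin 2, e r c ≠ 0 := by
    by_contra hall
    push_neg at hall
    exact hene (by ext r c; exact hall r c)
  obtain ⟨r0, c0, hr0c0⟩ := hev
  obtain ⟨v₀, hv₀⟩ : ∃ v : Fin 2 → K, v = Pi.single c0 1 := ⟨_, rfl⟩
  obtain ⟨v₁, hv₁⟩ : ∃ v : Fin 2 → K, v = e.mulVec v₀ := ⟨_, rfl⟩
  obtain ⟨v₂, hv₂⟩ : ∃ v : Fin 2 → K, v = q.mulVec v₁ := ⟨_, rfl⟩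
  have hv₁r0 : v₁ r0 = e r0 c0 := by
    rw [hv₁, hv₀]
    simp [Matrix.mulVec_single]
  have hv₁ne : v₁ ≠ 0 := by
    intro h0
    rw [h0] at hv₁r0
    exact hr0c0 (by rw [← hv₁r0]; rfl)
  have hev1 : e.mulVec v₁ = v₁ := by
    rw [hv₁, Matrix.mulVec_mulVec, hee]
  have hev2 : e.mulVec v₂ = 0 := by
    rw [hv₂, Matrix.mulVec_mulVec, heq, Matrix.zero_mulVec]
  have hpv1 : p.mulVec v₁ = 0 := by
    rw [hv₁, Matrix.mulVec_mulVec, hpe, Matrix.zero_mulVec]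
  have hpv2 : p.mulVec v₂ = v₁ := by
    rw [hv₂, Matrix.mulVec_mulVec, hpq, ← hev1, hv₁, Matrix.mulVec_mulVec, hee]
  have hqv1 : q.mulVec v₁ = v₂ := by rw [hv₂]
  have hqv2 : q.mulVec v₂ = 0 := by
    rw [hv₂, Matrix.mulVec_mulVec, hqq, Matrix.zero_mulVec]
  have hv₂ne : v₂ ≠ 0 := by
    intro h0
    have := hpv2
    rw [h0, Matrix.mulVec_zero] at this
    exact hv₁ne this.symm
  have hfv1 : f.mulVec v₁ = 0 := by
    rw [hf, Matrix.sub_mulVec, Matrix.one_mulVec, hev1, sub_self]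
  have hfv2 : f.mulVec v₂ = v₂ := by
    rw [hf, Matrix.sub_mulVec, Matrix.one_mulVec, hev2, sub_zero]
  -- the change of basis matrix
  obtain ⟨g, hg⟩ : ∃ g' : Matrix (Fin 2) (Fin 2) K, g' = Matrix.of fun r c => ![v₁, v₂] c r :=
    ⟨_, rfl⟩
  have hgmul : ∀ tv : Fin 2 → K, g.mulVec tv = tv 0 • v₁ + tv 1 • v₂ := by
    intro tv
    funext r
    rw [hg]
    simp [Matrix.mulVec, dotProduct, Fin.sum_univ_two, mul_comm]
  have hdet : g.det ≠ 0 := by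
    intro h0
    obtain ⟨tv, htne, hteq⟩ := (Matrix.exists_mulVec_eq_zero_iff).mpr h0
    rw [hgmul] at hteq
    have h0' : e.mulVec (tv 0 • v₁ + tv 1 • v₂) = 0 := by rw [hteq, Matrix.mulVec_zero]
    rw [Matrix.mulVec_add, Matrix.mulVec_smul, Matrix.mulVec_smul, hev1, hev2, smul_zero,
      add_zero] at h0'
    have ht0 : tv 0 = 0 := by
      rcases smul_eq_zero.mp h0' with h1 | h1
      · exact h1
      · exact absurd h1 hv₁ne
    rw [ht0, zero_smul, zero_add] at hteq
    have ht1 : tv 1 = 0 := by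
      rcases smul_eq_zero.mp hteq with h1 | h1
      · exact h1
      · exact absurd h1 hv₂ne
    apply htne
    funext r
    fin_cases r
    · exact ht0
    · exact ht1
  have hgu : IsUnit g := (Matrix.isUnit_iff_isUnit_det g).mpr (isUnit_iff_ne_zero.mpr hdet)
  obtain ⟨G, hGg⟩ : ∃ G' : (Matrix (Fin 2) (Fin 2) K)ˣ, (↑G' : Matrix (Fin 2) (Fin 2) K) = g :=
    ⟨hgu.unit, hgu.unit_spec⟩
  -- column action
  have hcolg : ∀ (A : Matrix (Fin 2) (Fin 2) K) (r c : Fin 2),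
      (A * g) r c = A.mulVec (![v₁, v₂] c) r := by
    intro A r c
    rw [Matrix.mul_apply, Matrix.mulVec, dotProduct]
    apply Finset.sum_congr rfl
    intro k _
    rw [hg]
    rfl
  have key : ∀ (A n : Matrix (Fin 2) (Fin 2) K),
      A.mulVec v₁ = n 0 0 • v₁ + n 1 0 • v₂ →
      A.mulVec v₂ = n 0 1 • v₁ + n 1 1 • v₂ → A * g = g * n := by
    intro A n h1 h2
    ext r c
    rw [hcolg]
    have hrhs : (g * n) r c = v₁ r * n 0 c + v₂ r * n 1 c := by
      rw [Matrix.mul_apply, Fin.sum_univ_two, hg]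
      rfl
    rw [hrhs]
    fin_cases c
    · show A.mulVec (![v₁, v₂] 0) r = v₁ r * n 0 0 + v₂ r * n 1 0
      rw [show (![v₁, v₂] (0 : Fin 2)) = v₁ from rfl, h1]
      simp only [Pi.add_apply, Pi.smul_apply, smul_eq_mul]
      ring
    · show A.mulVec (![v₁, v₂] 1) r = v₁ r * n 0 1 + v₂ r * n 1 1
      rw [show (![v₁, v₂] (1 : Fin 2)) = v₂ from rfl, h2]
      simp only [Pi.add_apply, Pi.smul_apply, smul_eq_mul]
      ring
  -- standard matrix units
  obtain ⟨E00, hE00⟩ : ∃ E : Matrix (Fin 2) (Fin 2) K, E = Matrix.single 0 0 1 := ⟨_, rfl⟩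
  obtain ⟨E01, hE01⟩ : ∃ E : Matrix (Fin 2) (Fin 2) K, E = Matrix.single 0 1 1 := ⟨_, rfl⟩
  obtain ⟨E10, hE10⟩ : ∃ E : Matrix (Fin 2) (Fin 2) K, E = Matrix.single 1 0 1 := ⟨_, rfl⟩
  obtain ⟨E11, hE11⟩ : ∃ E : Matrix (Fin 2) (Fin 2) K, E = Matrix.single 1 1 1 := ⟨_, rfl⟩
  have hge : e * g = g * E00 := by
    apply key
    · rw [hev1, hE00]
      simp [Matrix.single]
    · rw [hev2, hE00]
      simp [Matrix.single]
  have hgp : p * g = g * E01 := by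
    apply key
    · rw [hpv1, hE01]
      simp [Matrix.single]
    · rw [hpv2, hE01]
      simp [Matrix.single]
  have hgq : q * g = g * E10 := by
    apply key
    · rw [hqv1, hE10]
      simp [Matrix.single]
    · rw [hqv2, hE10]
      simp [Matrix.single]
  have hgf : f * g = g * E11 := by
    apply key
    · rw [hfv1, hE11]
      simp [Matrix.single]
    · rw [hfv2, hE11]
      simp [Matrix.single]
  -- conjugation identities
  have conj_of : ∀ (A n : Matrix (Fin 2) (Fin 2) K), A * g = g * n →
      ((↑G⁻¹ : Matrix (Fin 2) (Fin 2) K) * A * (↑G : Matrix (Fin 2) (Fin 2) K) = n ∧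
       (↑G : Matrix (Fin 2) (Fin 2) K) * n * (↑G⁻¹ : Matrix (Fin 2) (Fin 2) K) = A) := by
    intro A n hAn
    have h1 : (↑G⁻¹ : Matrix (Fin 2) (Fin 2) K) * (↑G : Matrix (Fin 2) (Fin 2) K) = 1 := Units.inv_mul G
    have h2 : (↑G : Matrix (Fin 2) (Fin 2) K) * (↑G⁻¹ : Matrix (Fin 2) (Fin 2) K) = 1 := Units.mul_inv G
    constructor
    · calc (↑G⁻¹ : Matrix (Fin 2) (Fin 2) K) * A * (↑G : Matrix (Fin 2) (Fin 2) K) = ↑G⁻¹ * (A * ↑G) := by rw [mul_assoc]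
        _ = ↑G⁻¹ * (↑G * n) := by rw [hGg, hAn]
        _ = (↑G⁻¹ * ↑G) * n := by rw [mul_assoc]
        _ = n := by rw [h1, one_mul]
    · calc (↑G : Matrix (Fin 2) (Fin 2) K) * n * (↑G⁻¹ : Matrix (Fin 2) (Fin 2) K) = (↑G * n) * (↑G⁻¹ : Matrix (Fin 2) (Fin 2) K) := rfl
        _ = (A * ↑G) * (↑G⁻¹ : Matrix (Fin 2) (Fin 2) K) := by rw [hGg, hAn]
        _ = A * (↑G * (↑G⁻¹ : Matrix (Fin 2) (Fin 2) K)) := by rw [mul_assoc]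
        _ = A := by rw [h2, mul_one]
  obtain ⟨hconj_e, hinv_e⟩ := conj_of e E00 hge
  obtain ⟨hconj_p, hinv_p⟩ := conj_of p E01 hgp
  obtain ⟨hconj_q, hinv_q⟩ := conj_of q E10 hgq
  obtain ⟨hconj_f, hinv_f⟩ := conj_of f E11 hgf
  -- the set equality
  refine ⟨G, ?_⟩
  ext m
  simp only [Set.mem_setOf_eq]
  constructor
  · rintro ⟨a, b, c, d, rfl⟩
    have hdecomp : ι a • (1 : Matrix (Fin 2) (Fin 2) K) + ι b • i + ι c • j + ι d • (i * j) =
        ι (a + α*s*b + β*t*c) • e + ι (t*b - s*c - d) • p +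
        ι (α*β*(t*b - s*c + d)) • q + ι (a - α*s*b - β*t*c) • f := by
      rw [hf, he, hp, hq, hw, hx]
      simp only [map_mul, map_add, map_sub]
      match_scalars
      · linear_combination (-(ι α * ι s * ι b + ι β * ι t * ι c)) * hhalfK
      · linear_combination (-(ι ha * ι β * ι t * (ι t * ι b - ι s * ι c + ι d))) * hgiK +
          (-(2 * ι ha * ι b)) * hstK + (-(ι b)) * hhalfK
      · linear_combination (ι ha * ι α * ι s * (ι t * ι b - ι s * ι c + ι d)) * hgiK +
          (-(2 * ι ha * ι c)) * hstK + (-(ι c)) * hhalfK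
      · linear_combination (-(ι ha * (ι t * ι b - ι s * ι c + ι d))) * hgiK +
          (-(ι d)) * hhalfK
    rw [hdecomp]
    have hconjm : (↑G⁻¹ : Matrix (Fin 2) (Fin 2) K) *
        (ι (a + α*s*b + β*t*c) • e + ι (t*b - s*c - d) • p +
        ι (α*β*(t*b - s*c + d)) • q + ι (a - α*s*b - β*t*c) • f) * (↑G : Matrix (Fin 2) (Fin 2) K) =
        ι (a + α*s*b + β*t*c) • E00 + ι (t*b - s*c - d) • E01 +
        ι (α*β*(t*b - s*c + d)) • E10 + ι (a - α*s*b - β*t*c) • E11 := by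
      simp only [mul_add, add_mul, mul_smul_comm, smul_mul_assoc]
      rw [hconj_e, hconj_p, hconj_q, hconj_f]
    rw [hconjm, hE00, hE01, hE10, hE11, combo_entries]
    intro r c'
    fin_cases r <;> fin_cases c' <;>
      simp only [Matrix.of_apply, Matrix.cons_val', Matrix.cons_val_zero, Matrix.cons_val_one,
        Matrix.head_cons, Matrix.head_fin_const, Matrix.empty_val', Matrix.cons_val_fin_one] <;>
      exact ⟨_, rfl⟩
  · intro hI
    choose N hN using fun r c' => hI r c'
    have hn : (↑G⁻¹ : Matrix (Fin 2) (Fin 2) K) * m * (↑G : Matrix (Fin 2) (Fin 2) K) =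
        ι (N 0 0) • E00 + ι (N 0 1) • E01 + ι (N 1 0) • E10 + ι (N 1 1) • E11 := by
      rw [hE00, hE01, hE10, hE11, combo_entries]
      ext r c'
      fin_cases r <;> fin_cases c' <;>
        first
          | exact (hN 0 0).symm
          | exact (hN 0 1).symm
          | exact (hN 1 0).symm
          | exact (hN 1 1).symm
    have hcancel : (↑G : Matrix (Fin 2) (Fin 2) K) *
        ((↑G⁻¹ : Matrix (Fin 2) (Fin 2) K) * m * (↑G : Matrix (Fin 2) (Fin 2) K)) *
        (↑G⁻¹ : Matrix (Fin 2) (Fin 2) K) = m := by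
      have h1 : (↑G⁻¹ : Matrix (Fin 2) (Fin 2) K) * (↑G : Matrix (Fin 2) (Fin 2) K) = 1 := Units.inv_mul G
      have h2 : (↑G : Matrix (Fin 2) (Fin 2) K) * (↑G⁻¹ : Matrix (Fin 2) (Fin 2) K) = 1 := Units.mul_inv G
      calc (↑G : Matrix (Fin 2) (Fin 2) K) *
          ((↑G⁻¹ : Matrix (Fin 2) (Fin 2) K) * m * (↑G : Matrix (Fin 2) (Fin 2) K)) *
          (↑G⁻¹ : Matrix (Fin 2) (Fin 2) K)
          = ((↑G : Matrix (Fin 2) (Fin 2) K) * (↑G⁻¹ : Matrix (Fin 2) (Fin 2) K)) * m *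
            ((↑G : Matrix (Fin 2) (Fin 2) K) * (↑G⁻¹ : Matrix (Fin 2) (Fin 2) K)) := by
              noncomm_ring
        _ = m := by rw [h2, one_mul, mul_one]
    have hm : m = ι (N 0 0) • e + ι (N 0 1) • p + ι (N 1 0) • q + ι (N 1 1) • f := by
      rw [← hcancel, hn]
      simp only [mul_add, add_mul, mul_smul_comm, smul_mul_assoc]
      rw [hinv_e, hinv_p, hinv_q, hinv_f]
    refine ⟨ha*(N 0 0 + N 1 1),
      ha*(s*(N 0 0) + β*t*(N 0 1) + gi*β*t*(N 1 0) - s*(N 1 1)),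
      ha*(t*(N 0 0) - α*s*(N 0 1) - gi*α*s*(N 1 0) - t*(N 1 1)),
      ha*(gi*(N 1 0) - N 0 1), ?_⟩
    rw [hm, hf, he, hp, hq, hw, hx]
    simp only [map_mul, map_add, map_sub]
    match_scalars
    · linear_combination (-(ι (N 1 1))) * hhalfK
    · ring
    · ring
    · ring

end Main


/-- A maximal order of `M₂(K)`: a conjugate `g·M₂(O)·g⁻¹` of `M₂(O)`, as a set. -/
def IsMaximalOrderM2 (O : Type*) [CommRing O] (K : Type*) [Field K] [Algebra O K]
    (D : Set (Matrix (Fin 2) (Fin 2) K)) : Prop :=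
  ∃ g : Matrix.GeneralLinearGroup (Fin 2) K,
    D = {m | ∀ i j : Fin 2,
      ((↑g⁻¹ : Matrix (Fin 2) (Fin 2) K) * m * (↑g : Matrix (Fin 2) (Fin 2) K)) i j
        ∈ Set.range (algebraMap O K)}

/-- Over a non-dyadic local field, for anticommuting `i, j ∈ M₂(k)` with unit squares,
the order `O[i,j] = O + Oi + Oj + Oij` is itself a maximal order, and is the unique
maximal order containing it. -/
theorem stmt_17 (O : Type*) [CommRing O] [IsDomain O] [IsDiscreteValuationRing O]
    [IsAdicComplete (IsLocalRing.maximalIdeal O) O] [Finite (IsLocalRing.ResidueField O)]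
    (K : Type*) [Field K] [Algebra O K] [IsFractionRing O K]
    (h2 : IsUnit (2 : O))
    (i j : Matrix (Fin 2) (Fin 2) K)
    (α β : O) (hα : IsUnit α) (hβ : IsUnit β)
    (hanti : i * j = -(j * i))
    (hi2 : i * i = algebraMap O K α • (1 : Matrix (Fin 2) (Fin 2) K))
    (hj2 : j * j = algebraMap O K β • (1 : Matrix (Fin 2) (Fin 2) K)) :
    IsMaximalOrderM2 O K
      {x | ∃ a b c d : O, x = algebraMap O K a • (1 : Matrix (Fin 2) (Fin 2) K) +
        algebraMap O K b • i + algebraMap O K c • j + algebraMap O K d • (i * j)} ∧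
    ∀ D : Set (Matrix (Fin 2) (Fin 2) K), IsMaximalOrderM2 O K D →
      {x | ∃ a b c d : O, x = algebraMap O K a • (1 : Matrix (Fin 2) (Fin 2) K) +
        algebraMap O K b • i + algebraMap O K c • j + algebraMap O K d • (i * j)} ⊆ D →
      D = {x | ∃ a b c d : O, x = algebraMap O K a • (1 : Matrix (Fin 2) (Fin 2) K) +
        algebraMap O K b • i + algebraMap O K c • j + algebraMap O K d • (i * j)} := by
  obtain ⟨g, hg⟩ := part1 O K h2 i j α β hα hβ hanti hi2 hj2
  refine ⟨⟨g, hg⟩, ?_⟩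
  rintro D ⟨h, rfl⟩ hsub
  -- notation
  set S := {x | ∃ a b c d : O, x = algebraMap O K a • (1 : Matrix (Fin 2) (Fin 2) K) +
      algebraMap O K b • i + algebraMap O K c • j + algebraMap O K d • (i * j)} with hS
  have hgS : ∀ m : Matrix (Fin 2) (Fin 2) K,
      (∀ r s : Fin 2, ((↑g⁻¹ : Matrix (Fin 2) (Fin 2) K) * m *
        (↑g : Matrix (Fin 2) (Fin 2) K)) r s ∈ Set.range (algebraMap O K)) → m ∈ S := by
    intro m hm
    exact (Set.ext_iff.mp hg m).mpr hm
  have hgS' : ∀ m : Matrix (Fin 2) (Fin 2) K, m ∈ S →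
      (∀ r s : Fin 2, ((↑g⁻¹ : Matrix (Fin 2) (Fin 2) K) * m *
        (↑g : Matrix (Fin 2) (Fin 2) K)) r s ∈ Set.range (algebraMap O K)) := by
    intro m hm
    exact (Set.ext_iff.mp hg m).mp hm
  set u : (Matrix (Fin 2) (Fin 2) K)ˣ := h⁻¹ * g with hu
  have huc : (↑u : Matrix (Fin 2) (Fin 2) K) =
      (↑h⁻¹ : Matrix (Fin 2) (Fin 2) K) * (↑g : Matrix (Fin 2) (Fin 2) K) := rfl
  have huc' : (↑u⁻¹ : Matrix (Fin 2) (Fin 2) K) =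
      (↑g⁻¹ : Matrix (Fin 2) (Fin 2) K) * (↑h : Matrix (Fin 2) (Fin 2) K) := by
    rw [hu, mul_inv_rev, inv_inv]
    rfl
  have hflip := conj_preserve_flip (O := O) u ?_
  · -- conclude : D ⊆ S, then antisymm
    apply Set.Subset.antisymm _ hsub
    intro m hm
    simp only [Set.mem_setOf_eq] at hm
    apply hgS
    intro r s
    have hint : ∀ r s : Fin 2, ((↑u⁻¹ : Matrix (Fin 2) (Fin 2) K) *
        ((↑h⁻¹ : Matrix (Fin 2) (Fin 2) K) * m * (↑h : Matrix (Fin 2) (Fin 2) K)) *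
        (↑u : Matrix (Fin 2) (Fin 2) K)) r s ∈ Set.range (algebraMap O K) :=
      hflip _ hm
    have heqm : (↑u⁻¹ : Matrix (Fin 2) (Fin 2) K) *
        ((↑h⁻¹ : Matrix (Fin 2) (Fin 2) K) * m * (↑h : Matrix (Fin 2) (Fin 2) K)) *
        (↑u : Matrix (Fin 2) (Fin 2) K) =
        (↑g⁻¹ : Matrix (Fin 2) (Fin 2) K) * m * (↑g : Matrix (Fin 2) (Fin 2) K) := by
      rw [huc, huc']
      have h1 : (↑h : Matrix (Fin 2) (Fin 2) K) * (↑h⁻¹ : Matrix (Fin 2) (Fin 2) K) = 1 :=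
        Units.mul_inv h
      calc (↑g⁻¹ : Matrix (Fin 2) (Fin 2) K) * ↑h *
            ((↑h⁻¹ : Matrix (Fin 2) (Fin 2) K) * m * (↑h : Matrix (Fin 2) (Fin 2) K)) *
            ((↑h⁻¹ : Matrix (Fin 2) (Fin 2) K) * ↑g)
          = (↑g⁻¹ : Matrix (Fin 2) (Fin 2) K) *
            ((↑h : Matrix (Fin 2) (Fin 2) K) * (↑h⁻¹ : Matrix (Fin 2) (Fin 2) K)) * m *
            (((↑h : Matrix (Fin 2) (Fin 2) K) * (↑h⁻¹ : Matrix (Fin 2) (Fin 2) K)) *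
              (↑g : Matrix (Fin 2) (Fin 2) K)) := by noncomm_ring
        _ = (↑g⁻¹ : Matrix (Fin 2) (Fin 2) K) * m * (↑g : Matrix (Fin 2) (Fin 2) K) := by
            rw [h1, mul_one, one_mul]
    rw [← heqm]
    exact hint r s
  · -- the hypothesis for conj_preserve_flip
    intro n hn a b
    have hmS : (↑g : Matrix (Fin 2) (Fin 2) K) * n * (↑g⁻¹ : Matrix (Fin 2) (Fin 2) K) ∈ S := by
      apply hgS
      intro r s
      have hcan : (↑g⁻¹ : Matrix (Fin 2) (Fin 2) K) *
          ((↑g : Matrix (Fin 2) (Fin 2) K) * n * (↑g⁻¹ : Matrix (Fin 2) (Fin 2) K)) *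
          (↑g : Matrix (Fin 2) (Fin 2) K) = n := by
        have h1 : (↑g⁻¹ : Matrix (Fin 2) (Fin 2) K) * (↑g : Matrix (Fin 2) (Fin 2) K) = 1 :=
          Units.inv_mul g
        calc (↑g⁻¹ : Matrix (Fin 2) (Fin 2) K) *
            ((↑g : Matrix (Fin 2) (Fin 2) K) * n * (↑g⁻¹ : Matrix (Fin 2) (Fin 2) K)) *
            (↑g : Matrix (Fin 2) (Fin 2) K)
            = ((↑g⁻¹ : Matrix (Fin 2) (Fin 2) K) * (↑g : Matrix (Fin 2) (Fin 2) K)) * n *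
              ((↑g⁻¹ : Matrix (Fin 2) (Fin 2) K) * (↑g : Matrix (Fin 2) (Fin 2) K)) := by
                noncomm_ring
          _ = n := by rw [h1, one_mul, mul_one]
      rw [hcan]
      exact hn r s
    have hmD := hsub hmS
    simp only [Set.mem_setOf_eq] at hmD
    have heqm : (↑h⁻¹ : Matrix (Fin 2) (Fin 2) K) *
        ((↑g : Matrix (Fin 2) (Fin 2) K) * n * (↑g⁻¹ : Matrix (Fin 2) (Fin 2) K)) *
        (↑h : Matrix (Fin 2) (Fin 2) K) =
        (↑u : Matrix (Fin 2) (Fin 2) K) * n * (↑u⁻¹ : Matrix (Fin 2) (Fin 2) K) := by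
      rw [huc, huc']
      noncomm_ring
    rw [← heqm]
    exact hmD a b
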